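/- Let n ≥ 2 and let x_1,…,x_n be points on the unit circle in ℂ forming a single cluster, i.e. δ ≤ |x_i − x_j| ≤ τδ for all i ≠ j, with 0 < δ < 1 and τ > 1, and let amplitudes α_1,…,α_n ∈ ℂ satisfy 𝔪 ≤ |α_j| ≤ 𝔐 for some 0 < 𝔪 ≤ 𝔐. Then there exist constants c > 0 and C > 0 depending only on n, τ, 𝔪, 𝔐 (not on δ or the particular configuration) such that: for all perturbed moments m̃_k = m_k + ε_k, k = 0,…,2n−1, with |ε_k| ≤ ε ≤ c δ^{3n−3}, the perturbed Hankel matrix H̃_n = (m̃_{i+j})_{i,j=0}^{n−1} is invertible, and the unique solution q = (q_0,…,q_{n−1}) of H̃_n q = −(m̃_n,…,m̃_{2n−1})ᵀ satisfies |p_i − q_i| ≤ C δ^{3−3n} ε for every i, where p(z) = ∏_{j=1}^n (z − x_j) = z^n + ∑_{i=0}^{n−1} p_i z^i is the monic Prony polynomial. -/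

import Mathlib

open Matrix

open Polynomial


set_option maxHeartbeats 1000000

lemma prony_coeff_prod_abs_le {ι : Type*} [DecidableEq ι] (s : Finset ι) (x : ι → ℂ)
    (hx : ∀ l ∈ s, ‖x l‖ ≤ 1) :
    ∀ i : ℕ, ‖(∏ l ∈ s, (X - C (x l))).coeff i‖ ≤ 2 ^ s.card := by
  induction s using Finset.induction_on with
  | empty =>
    intro i
    simp only [Finset.prod_empty, Polynomial.coeff_one, Finset.card_empty, pow_zero]
    split <;> simp
  | @insert a s ha ih =>
    intro i
    have hxa : ‖x a‖ ≤ 1 := hx a (Finset.mem_insert_self a s)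
    have ih' := ih (fun l hl => hx l (Finset.mem_insert_of_mem hl))
    rw [Finset.prod_insert ha, Finset.card_insert_of_notMem ha]
    set P := ∏ l ∈ s, (X - C (x l)) with hP
    have h1 : ((X - C (x a)) * P).coeff i = (X * P).coeff i - x a * P.coeff i := by
      rw [sub_mul, Polynomial.coeff_sub, Polynomial.coeff_C_mul]
    rw [h1]
    have hXP : ‖(X * P).coeff i‖ ≤ 2 ^ s.card := by
      cases i with
      | zero => simp [Polynomial.mul_coeff_zero]
      | succ k => rw [Polynomial.coeff_X_mul]; exact ih' k
    have t1 := norm_sub_le ((X * P).coeff i) (x a * P.coeff i)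
    have t2 : ‖x a * P.coeff i‖ ≤ 1 * 2 ^ s.card := by
      rw [norm_mul]
      exact mul_le_mul hxa (ih' i) (norm_nonneg _) zero_le_one
    have t3 : (2:ℝ) ^ s.card + 1 * 2 ^ s.card = 2 ^ (s.card + 1) := by ring
    linarith

lemma prony_vec_bound {n : ℕ} (hn : 0 < n) (A : Matrix (Fin n) (Fin n) ℂ) (a : ℝ)
    (hA : ∀ i j, ‖A i j‖ ≤ a) (h2 : (n : ℝ) * a ≤ 1 / 2)
    (v u : Fin n → ℂ) (hvu : ∀ i, v i = u i - (A *ᵥ v) i)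
    (bu : ℝ) (hbu : ∀ i, ‖u i‖ ≤ bu) :
    ∀ i, ‖v i‖ ≤ 2 * bu := by
  have ha0 : 0 ≤ a := le_trans (norm_nonneg _) (hA ⟨0, hn⟩ ⟨0, hn⟩)
  obtain ⟨i₀, -, hmax⟩ := Finset.exists_max_image Finset.univ
    (fun i => ‖v i‖) ⟨⟨0, hn⟩, Finset.mem_univ _⟩
  have hM : ∀ i, ‖v i‖ ≤ ‖v i₀‖ :=
    fun i => hmax i (Finset.mem_univ i)
  have hAv : ∀ i, ‖(A *ᵥ v) i‖ ≤ (n : ℝ) * a * ‖v i₀‖ := by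
    intro i
    calc ‖(A *ᵥ v) i‖ = ‖∑ j, A i j * v j‖ := by
          simp [Matrix.mulVec, dotProduct]
      _ ≤ ∑ j, ‖A i j * v j‖ := norm_sum_le _ _
      _ ≤ ∑ _j : Fin n, a * ‖v i₀‖ := by
          refine Finset.sum_le_sum fun j _ => ?_
          rw [norm_mul]
          exact mul_le_mul (hA i j) (hM j) (norm_nonneg _) ha0
      _ = (n : ℝ) * a * ‖v i₀‖ := by
          rw [Finset.sum_const, Finset.card_univ, Fintype.card_fin, nsmul_eq_mul, mul_assoc]
  have hkey : ‖v i₀‖ ≤ 2 * bu := by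
    have h1 : ‖v i₀‖ ≤ bu + (n : ℝ) * a * ‖v i₀‖ := by
      calc ‖v i₀‖ = ‖u i₀ - (A *ᵥ v) i₀‖ := by rw [← hvu i₀]
        _ ≤ ‖u i₀‖ + ‖(A *ᵥ v) i₀‖ := norm_sub_le _ _
        _ ≤ bu + (n : ℝ) * a * ‖v i₀‖ := add_le_add (hbu i₀) (hAv i₀)
    have h3 : (n : ℝ) * a * ‖v i₀‖ ≤ (1/2) * ‖v i₀‖ :=
      mul_le_mul_of_nonneg_right h2 (norm_nonneg _)
    linarith
  exact fun i => le_trans (hM i) hkey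

set_option maxHeartbeats 2000000 in
/-- Naive accuracy of the Prony polynomial coefficients for a single cluster:
With nodes on the unit circle forming a single cluster of extent `δ` and amplitudes bounded
between `mA` and `MA`, there are constants `c, C₁` (depending only on `n, τ, mA, MA`) such that
for noise level `ε ≤ c δ^{3n-3}` the perturbed Hankel matrix is invertible and the coefficients
of the perturbed Prony polynomial satisfy `|p_i - q_i| ≤ C₁ δ^{3-3n} ε`. -/
theorem prony_naive_coefficient_accuracy
    (n : ℕ) (hn : 2 ≤ n) (τ mA MA : ℝ) (hτ : 1 < τ) (hmA : 0 < mA) (hMA : mA ≤ MA) :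
    ∃ c C₁ : ℝ, 0 < c ∧ 0 < C₁ ∧
      ∀ (δ : ℝ) (x α : Fin n → ℂ),
        0 < δ → δ < 1 →
        (∀ j, ‖x j‖ = 1) →
        (∀ i j, i ≠ j →
          δ ≤ ‖x i - x j‖ ∧ ‖x i - x j‖ ≤ τ * δ) →
        (∀ j, mA ≤ ‖α j‖ ∧ ‖α j‖ ≤ MA) →
        ∀ (ε : ℝ) (mt : ℕ → ℂ),
          0 ≤ ε → ε ≤ c * δ ^ (3 * n - 3) →
          (∀ k, k < 2 * n → ‖mt k - ∑ j, α j * x j ^ k‖ ≤ ε) →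
          IsUnit (Matrix.of fun i j : Fin n => mt ((i : ℕ) + (j : ℕ))).det ∧
          ∀ q : Fin n → ℂ,
            ((Matrix.of fun i j : Fin n => mt ((i : ℕ) + (j : ℕ))) *ᵥ q =
              fun i : Fin n => -mt (n + (i : ℕ))) →
            ∀ i : Fin n,
              ‖(∏ j, (Polynomial.X - Polynomial.C (x j))).coeff (i : ℕ) - q i‖ ≤
                C₁ * δ ^ (3 - 3 * (n : ℤ)) * ε := by
  classical
  refine ⟨mA / (2 * (n:ℝ)^3 * 4^n), 2*(n:ℝ)^2*4^n*((n:ℝ)*2^n+1)/mA,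
    by positivity, by positivity, ?_⟩
  intro δ x α hδ hδ1 hx hsep hα ε mt hε hεc hmt
  have hn0 : 0 < n := by omega
  set m : ℕ → ℂ := fun k => ∑ j, α j * x j ^ k with hm
  have hmt' : ∀ k, k < 2 * n → ‖mt k - m k‖ ≤ ε := hmt
  have hd1 : (0:ℝ) < δ ^ (n-1) := pow_pos hδ _
  have hd1le : δ ^ (n-1) ≤ 1 := pow_le_one₀ hδ.le hδ1.le
  have hαne : ∀ j, α j ≠ 0 := by
    intro j h
    have h1 := (hα j).1
    rw [h] at h1; simp at h1; linarith
  -- matrices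
  set V : Matrix (Fin n) (Fin n) ℂ := Matrix.of (fun i j : Fin n => x j ^ (i:ℕ)) with hV
  set L : Fin n → Polynomial ℂ :=
    fun j => ∏ l ∈ Finset.univ.erase j, (Polynomial.X - Polynomial.C (x l)) with hLdef
  set cc : Fin n → ℂ := fun j => ∏ l ∈ Finset.univ.erase j, (x j - x l) with hcc
  set M : Matrix (Fin n) (Fin n) ℂ :=
    Matrix.of (fun j i : Fin n => (cc j)⁻¹ * (L j).coeff (i:ℕ)) with hMdef
  have hcard : ∀ j : Fin n, (Finset.univ.erase j).card = n - 1 := fun j => by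
    rw [Finset.card_erase_of_mem (Finset.mem_univ j), Finset.card_univ, Fintype.card_fin]
  have hccabs : ∀ j, δ ^ (n-1) ≤ ‖cc j‖ := by
    intro j
    have habs : ‖cc j‖ = ∏ l ∈ Finset.univ.erase j, ‖x j - x l‖ := by
      rw [hcc]; exact norm_prod _ _
    rw [habs]
    calc δ ^ (n-1) = ∏ _l ∈ Finset.univ.erase j, δ := by rw [Finset.prod_const, hcard j]
      _ ≤ ∏ l ∈ Finset.univ.erase j, ‖x j - x l‖ :=
          Finset.prod_le_prod (fun _ _ => hδ.le)
            (fun l hl => (hsep j l (Ne.symm (Finset.mem_erase.mp hl).1)).1)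
  have hccne : ∀ j, cc j ≠ 0 := by
    intro j h
    have := hccabs j
    rw [h] at this; simp at this; linarith
  have hLdeg : ∀ j, (L j).natDegree < n := by
    intro j
    have hdeq : (L j).natDegree = n - 1 := by
      rw [hLdef]
      rw [Polynomial.natDegree_prod_of_monic _ _
        (fun l _ => Polynomial.monic_X_sub_C (x l))]
      simp [Polynomial.natDegree_X_sub_C, hcard j]
    omega
  have hLeval : ∀ j k, (L j).eval (x k) = ∏ l ∈ Finset.univ.erase j, (x k - x l) := by
    intro j k
    rw [hLdef]; simp [Polynomial.eval_prod]
  have hMV : M * V = 1 := by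
    ext j k
    rw [Matrix.mul_apply]
    have hstep : ∀ i : Fin n, M j i * V i k
        = (cc j)⁻¹ * ((L j).coeff (i:ℕ) * x k ^ (i:ℕ)) := by
      intro i; simp only [hMdef, hV, Matrix.of_apply]; ring
    rw [Finset.sum_congr rfl (fun i _ => hstep i), ← Finset.mul_sum]
    rw [Fin.sum_univ_eq_sum_range (fun i => (L j).coeff i * x k ^ i) n]
    rw [← Polynomial.eval_eq_sum_range' (hLdeg j), hLeval j k]
    by_cases hjk : k = j
    · subst hjk
      have : (∏ l ∈ Finset.univ.erase k, (x k - x l)) = cc k := by rw [hcc]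
      rw [this, inv_mul_cancel₀ (hccne k), Matrix.one_apply_eq]
    · rw [Finset.prod_eq_zero (Finset.mem_erase.mpr ⟨hjk, Finset.mem_univ k⟩)
        (sub_self (x k)), mul_zero, Matrix.one_apply_ne' hjk]
  have hVM : V * M = 1 := mul_eq_one_comm.mp hMV
  set D : Matrix (Fin n) (Fin n) ℂ := Matrix.diagonal α with hD
  set DI : Matrix (Fin n) (Fin n) ℂ := Matrix.diagonal (fun j => (α j)⁻¹) with hDI
  set H : Matrix (Fin n) (Fin n) ℂ :=
    Matrix.of (fun i j : Fin n => m ((i:ℕ) + (j:ℕ))) with hHdef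
  have hH : H = V * D * Vᵀ := by
    ext i k
    rw [hHdef, hD, hV]
    rw [Matrix.mul_apply]
    simp only [Matrix.mul_diagonal, Matrix.transpose_apply, Matrix.of_apply, hm]
    refine Finset.sum_congr rfl fun j _ => ?_
    rw [pow_add]; ring
  set G : Matrix (Fin n) (Fin n) ℂ := Mᵀ * DI * M with hG
  have hDID : DI * D = 1 := by
    rw [hDI, hD, Matrix.diagonal_mul_diagonal]
    have : (fun j => (α j)⁻¹ * α j) = fun _ => (1:ℂ) :=
      funext fun j => inv_mul_cancel₀ (hαne j)
    rw [this, Matrix.diagonal_one]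
  have hGH : G * H = 1 := by
    rw [hG, hH]
    have h1 : M * (V * (D * Vᵀ)) = D * Vᵀ := by
      rw [← Matrix.mul_assoc, hMV, Matrix.one_mul]
    have h2 : DI * (D * Vᵀ) = Vᵀ := by
      rw [← Matrix.mul_assoc, hDID, Matrix.one_mul]
    calc Mᵀ * DI * M * (V * D * Vᵀ) = Mᵀ * (DI * (M * (V * (D * Vᵀ)))) := by
          simp only [Matrix.mul_assoc]
      _ = Mᵀ * Vᵀ := by rw [h1, h2]
      _ = (V * M)ᵀ := (Matrix.transpose_mul _ _).symm
      _ = 1 := by rw [hVM, Matrix.transpose_one]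
  have hHG : H * G = 1 := mul_eq_one_comm.mp hGH
  have hUnitH : IsUnit H := ⟨⟨H, G, hHG, hGH⟩, rfl⟩
  -- Prony polynomial
  set P : Polynomial ℂ := ∏ j, (Polynomial.X - Polynomial.C (x j)) with hPdef
  have hPmonic : P.Monic := Polynomial.monic_prod_of_monic _ _
    (fun j _ => Polynomial.monic_X_sub_C (x j))
  have hPdeg : P.natDegree = n := by
    rw [hPdef, Polynomial.natDegree_prod_of_monic _ _
      (fun j _ => Polynomial.monic_X_sub_C (x j))]
    simp [Polynomial.natDegree_X_sub_C]
  have hPeval : ∀ j, P.eval (x j) = 0 := by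
    intro j
    rw [hPdef, Polynomial.eval_prod]
    exact Finset.prod_eq_zero (Finset.mem_univ j) (by simp)
  have hsum_p : ∀ j, ∑ k : Fin n, P.coeff (k:ℕ) * x j ^ (k:ℕ) = - x j ^ n := by
    intro j
    have hdeg : P.natDegree < n + 1 := by omega
    have he := Polynomial.eval_eq_sum_range' hdeg (x j)
    rw [hPeval j, Finset.sum_range_succ] at he
    have hcn : P.coeff n = 1 := by
      have h := hPmonic.coeff_natDegree
      rwa [hPdeg] at h
    rw [hcn, one_mul] at he
    rw [Fin.sum_univ_eq_sum_range (fun k => P.coeff k * x j ^ k) n]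
    linear_combination -he
  have hHp : ∀ i : Fin n,
      ∑ k : Fin n, m ((i:ℕ) + (k:ℕ)) * P.coeff (k:ℕ) = - m (n + (i:ℕ)) := by
    intro i
    have hm' : ∀ k : ℕ, m k = ∑ j, α j * x j ^ k := fun _ => rfl
    calc ∑ k : Fin n, m ((i:ℕ)+(k:ℕ)) * P.coeff (k:ℕ)
        = ∑ k : Fin n, ∑ j, (α j * x j ^ (i:ℕ)) * (P.coeff (k:ℕ) * x j ^ (k:ℕ)) := by
          refine Finset.sum_congr rfl fun k _ => ?_
          rw [hm', Finset.sum_mul]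
          refine Finset.sum_congr rfl fun j _ => ?_
          rw [pow_add]; ring
      _ = ∑ j, (α j * x j ^ (i:ℕ)) * ∑ k : Fin n, P.coeff (k:ℕ) * x j ^ (k:ℕ) := by
          rw [Finset.sum_comm]
          exact Finset.sum_congr rfl fun j _ => (Finset.mul_sum _ _ _).symm
      _ = ∑ j, (α j * x j ^ (i:ℕ)) * (- x j ^ n) :=
          Finset.sum_congr rfl fun j _ => by rw [hsum_p j]
      _ = - m (n + (i:ℕ)) := by
          rw [hm', ← Finset.sum_neg_distrib]
          refine Finset.sum_congr rfl fun j _ => ?_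
          rw [pow_add]; ring
  have hpb : ∀ k : Fin n, ‖P.coeff (k:ℕ)‖ ≤ 2^n := by
    intro k
    have h := prony_coeff_prod_abs_le Finset.univ x (fun l _ => (hx l).le) (k:ℕ)
    rwa [Finset.card_univ, Fintype.card_fin, ← hPdef] at h
  -- perturbed matrix
  set Ht : Matrix (Fin n) (Fin n) ℂ :=
    Matrix.of (fun i j : Fin n => mt ((i:ℕ) + (j:ℕ))) with hHt
  set E : Matrix (Fin n) (Fin n) ℂ := Ht - H with hE
  have hEb : ∀ i j : Fin n, ‖E i j‖ ≤ ε := by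
    intro i j
    have hi := i.isLt; have hj := j.isLt
    have hij : (i:ℕ) + (j:ℕ) < 2*n := by omega
    have hEij : E i j = mt ((i:ℕ)+(j:ℕ)) - m ((i:ℕ)+(j:ℕ)) := by
      rw [hE]; simp [hHt, hHdef]
    rw [hEij]; exact hmt' _ hij
  -- entry bounds
  set mB : ℝ := 2^n / δ^(n-1) with hmB
  have hmB0 : (0:ℝ) ≤ mB := by positivity
  have hMb : ∀ j i, ‖M j i‖ ≤ mB := by
    intro j i
    have hMji : M j i = (cc j)⁻¹ * (L j).coeff (i:ℕ) := by rw [hMdef]; rfl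
    rw [hMji, norm_mul, norm_inv]
    have hc1 : (‖cc j‖)⁻¹ ≤ (δ^(n-1))⁻¹ :=
      inv_anti₀ hd1 (hccabs j)
    have hc2 : ‖(L j).coeff (i:ℕ)‖ ≤ 2^(n-1) := by
      have h := prony_coeff_prod_abs_le (Finset.univ.erase j) x
        (fun l _ => (hx l).le) (i:ℕ)
      rw [hcard j] at h; exact h
    calc (‖cc j‖)⁻¹ * ‖(L j).coeff (i:ℕ)‖
        ≤ (δ^(n-1))⁻¹ * 2^(n-1) :=
          mul_le_mul hc1 hc2 (norm_nonneg _) (by positivity)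
      _ ≤ mB := by
          rw [hmB, div_eq_mul_inv, mul_comm ((2:ℝ)^n)]
          have : (2:ℝ)^(n-1) ≤ 2^n := pow_le_pow_right₀ (by norm_num) (by omega)
          exact mul_le_mul_of_nonneg_left this (by positivity)
  set gB : ℝ := (n:ℝ) * mB^2 / mA with hgB
  have hgB0 : (0:ℝ) ≤ gB := by positivity
  have hGb : ∀ i k, ‖G i k‖ ≤ gB := by
    intro i k
    have hentry : G i k = ∑ j, (M j i * (α j)⁻¹) * M j k := by
      rw [hG, Matrix.mul_apply]
      refine Finset.sum_congr rfl fun j _ => ?_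
      rw [hDI, Matrix.mul_diagonal, Matrix.transpose_apply]
    have hterm : ∀ j : Fin n, ‖(M j i * (α j)⁻¹) * M j k‖ ≤ mB^2 / mA := by
      intro j
      have hinv : ‖(α j)⁻¹‖ ≤ mA⁻¹ := by
        rw [norm_inv]
        exact inv_anti₀ hmA (hα j).1
      rw [norm_mul, norm_mul]
      calc ‖M j i‖ * ‖(α j)⁻¹‖ * ‖M j k‖
          ≤ (mB * mA⁻¹) * mB := by
            refine mul_le_mul ?_ (hMb j k) (norm_nonneg _) (by positivity)
            exact mul_le_mul (hMb j i) hinv (norm_nonneg _) hmB0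
        _ = mB^2 / mA := by rw [div_eq_mul_inv]; ring
    calc ‖G i k‖ ≤ ∑ j, ‖(M j i * (α j)⁻¹) * M j k‖ := by
          rw [hentry]; exact norm_sum_le _ _
      _ ≤ ∑ _j : Fin n, mB^2 / mA := Finset.sum_le_sum fun j _ => hterm j
      _ = gB := by
          rw [Finset.sum_const, Finset.card_univ, Fintype.card_fin, nsmul_eq_mul,
            hgB, mul_div_assoc]
  set A : Matrix (Fin n) (Fin n) ℂ := G * E with hA
  have hAb : ∀ i j, ‖A i j‖ ≤ (n:ℝ) * (gB * ε) := by
    intro i j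
    have hentry : A i j = ∑ k, G i k * E k j := by rw [hA, Matrix.mul_apply]
    calc ‖A i j‖ ≤ ∑ k, ‖G i k * E k j‖ := by
          rw [hentry]; exact norm_sum_le _ _
      _ ≤ ∑ _k : Fin n, gB * ε := Finset.sum_le_sum fun k _ => by
          rw [norm_mul]
          exact mul_le_mul (hGb i k) (hEb k j) (norm_nonneg _) hgB0
      _ = (n:ℝ) * (gB * ε) := by
          rw [Finset.sum_const, Finset.card_univ, Fintype.card_fin, nsmul_eq_mul]
  have hδ3 : δ ^ (3*n-3) = (δ^(n-1))^3 := by rw [← pow_mul]; congr 1; omega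
  have h4n : ((2:ℝ)^n)^2 = 4^n := by
    rw [← pow_mul, mul_comm, pow_mul]; norm_num
  have hnR : (0:ℝ) < (n:ℝ) := Nat.cast_pos.mpr hn0
  have hsmall : (n:ℝ) * ((n:ℝ) * (gB * ε)) ≤ 1/2 := by
    have hε' : ε ≤ mA / (2*(n:ℝ)^3*4^n) * (δ^(n-1))^3 := by rw [← hδ3]; exact hεc
    have hmono : (n:ℝ) * ((n:ℝ) * (gB * ε)) ≤
        (n:ℝ) * ((n:ℝ) * (gB * (mA / (2*(n:ℝ)^3*4^n) * (δ^(n-1))^3))) := by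
      gcongr
    have heq : (n:ℝ) * ((n:ℝ) * (gB * (mA / (2*(n:ℝ)^3*4^n) * (δ^(n-1))^3)))
        = δ^(n-1)/2 := by
      rw [hgB, hmB, div_pow, h4n]
      field_simp
    rw [heq] at hmono
    linarith
  -- invertibility of 1 + A
  have hUnit1A : IsUnit ((1 : Matrix (Fin n) (Fin n) ℂ) + A) := by
    rw [← Matrix.mulVec_injective_iff_isUnit]
    intro v w hvw
    have h0 : (1 + A) *ᵥ (v - w) = 0 := by
      rw [Matrix.mulVec_sub, hvw, sub_self]
    have hrec : ∀ i, (v - w) i = (0 : Fin n → ℂ) i - (A *ᵥ (v - w)) i := by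
      intro i
      have h1 : ((1 + A) *ᵥ (v - w)) i = 0 := by rw [h0]; rfl
      rw [Matrix.add_mulVec, Matrix.one_mulVec] at h1
      simp only [Pi.add_apply] at h1
      simp only [Pi.zero_apply]
      linear_combination h1
    have hz := prony_vec_bound hn0 A ((n:ℝ)*(gB*ε)) hAb hsmall (v - w) 0 hrec 0
      (by simp)
    have hvw0 : v - w = 0 := by
      funext i
      have h := hz i
      rw [mul_zero] at h
      exact norm_eq_zero.mp (le_antisymm h (norm_nonneg _))
    exact sub_eq_zero.mp hvw0
  have hHtfact : Ht = H * (1 + A) := by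
    have h1 : H * (1 + A) = H + E := by
      rw [Matrix.mul_add, Matrix.mul_one, hA, ← Matrix.mul_assoc, hHG, Matrix.one_mul]
    rw [h1, hE]
    abel
  constructor
  · rw [hHtfact]
    exact (Matrix.isUnit_iff_isUnit_det _).mp (hUnitH.mul hUnit1A)
  · intro q hq i
    set p : Fin n → ℂ := fun k => P.coeff (k:ℕ) with hp
    set d : Fin n → ℂ := fun k => p k - q k with hd
    set r : Fin n → ℂ := Ht *ᵥ d with hr
    have hrexp : ∀ i : Fin n, r i =
        (∑ k : Fin n, (mt ((i:ℕ)+(k:ℕ)) - m ((i:ℕ)+(k:ℕ))) * p k)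
          + (mt (n+(i:ℕ)) - m (n+(i:ℕ))) := by
      intro i
      have h1 : ∑ k : Fin n, mt ((i:ℕ)+(k:ℕ)) * q k = -mt (n+(i:ℕ)) := by
        have h := congrFun hq i
        simpa [Matrix.mulVec, dotProduct, hHt] using h
      have h2 : ∑ k : Fin n, m ((i:ℕ)+(k:ℕ)) * p k = - m (n + (i:ℕ)) := hHp i
      have h3 : r i = ∑ k : Fin n, mt ((i:ℕ)+(k:ℕ)) * (p k - q k) := by
        rw [hr]
        simp [Matrix.mulVec, dotProduct, hHt, hd]
      rw [h3]
      simp only [mul_sub, sub_mul, Finset.sum_sub_distrib]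
      rw [h1, h2]
      ring
    have hrb : ∀ i, ‖r i‖ ≤ ε * ((n:ℝ) * 2^n + 1) := by
      intro i
      have hi := i.isLt
      rw [hrexp i]
      have hterm : ∀ k : Fin n,
          ‖(mt ((i:ℕ)+(k:ℕ)) - m ((i:ℕ)+(k:ℕ))) * p k‖ ≤ ε * 2^n := by
        intro k
        have hk := k.isLt
        rw [norm_mul]
        exact mul_le_mul (hmt' _ (by omega)) (hpb k) (norm_nonneg _) hε
      calc ‖_‖
          ≤ ‖∑ k : Fin n, (mt ((i:ℕ)+(k:ℕ)) - m ((i:ℕ)+(k:ℕ))) * p k‖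
            + ‖mt (n+(i:ℕ)) - m (n+(i:ℕ))‖ := norm_add_le _ _
        _ ≤ (∑ _k : Fin n, ε * 2^n) + ε := by
            refine add_le_add (le_trans (norm_sum_le _ _)
              (Finset.sum_le_sum fun k _ => hterm k)) (hmt' _ (by omega))
        _ = ε * ((n:ℝ) * 2^n + 1) := by
            rw [Finset.sum_const, Finset.card_univ, Fintype.card_fin, nsmul_eq_mul]
            ring
    have hGr : ∀ i, ‖(G *ᵥ r) i‖ ≤
        (n:ℝ) * (gB * (ε * ((n:ℝ)*2^n + 1))) := by
      intro i
      have hGri : (G *ᵥ r) i = ∑ k, G i k * r k := by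
        simp [Matrix.mulVec, dotProduct]
      rw [hGri]
      calc ‖_‖ ≤ ∑ k, ‖G i k * r k‖ := norm_sum_le _ _
        _ ≤ ∑ _k : Fin n, gB * (ε * ((n:ℝ)*2^n+1)) := Finset.sum_le_sum fun k _ => by
            rw [norm_mul]
            exact mul_le_mul (hGb i k) (hrb k) (norm_nonneg _) hgB0
        _ = _ := by
            rw [Finset.sum_const, Finset.card_univ, Fintype.card_fin, nsmul_eq_mul]
    have hGHt : G * Ht = 1 + A := by
      have hHtsum : Ht = H + E := by rw [hE]; abel
      rw [hHtsum, Matrix.mul_add, hGH, hA]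
    have hdrec : ∀ i, d i = (G *ᵥ r) i - (A *ᵥ d) i := by
      intro i
      have h1 : G *ᵥ r = d + A *ᵥ d := by
        rw [hr, Matrix.mulVec_mulVec, hGHt, Matrix.add_mulVec, Matrix.one_mulVec]
      rw [h1]
      simp only [Pi.add_apply]
      ring
    have hdb := prony_vec_bound hn0 A ((n:ℝ)*(gB*ε)) hAb hsmall d (G *ᵥ r) hdrec _ hGr
    have hzpow : δ ^ ((3:ℤ) - 3*(n:ℤ)) = ((δ^(n-1))^3)⁻¹ := by
      rw [show (3:ℤ) - 3*(n:ℤ) = -(((3*n-3 : ℕ) : ℤ)) by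
        rw [Nat.cast_sub (by omega : 3 ≤ 3*n)]; push_cast; ring]
      rw [_root_.zpow_neg, zpow_natCast, hδ3]
    have hle : ‖P.coeff (i:ℕ) - q i‖
        ≤ 2 * ((n:ℝ) * (gB * (ε * ((n:ℝ)*2^n+1)))) := hdb i
    have hcoef : 2 * ((n:ℝ) * (gB * (ε * ((n:ℝ)*2^n+1))))
        = ((2*(n:ℝ)^2*4^n*((n:ℝ)*2^n+1)/mA) * ((δ^(n-1))^3)⁻¹ * ε) * δ^(n-1) := by
      rw [hgB, hmB, div_pow, h4n]
      field_simp
    rw [hzpow]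
    refine le_trans hle ?_
    rw [hcoef]
    exact mul_le_of_le_one_right (by positivity) hd1le
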